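/- Let H be a simple graph without isolated vertices, and let x, y be adjacent vertices of degree 2 in H with other neighbors x' and y' respectively (x' ≠ y, y' ≠ x). If x' has a neighbor outside {x, y} and y' has a neighbor outside {x, y}, then the double subdivision S_2(H) is a DPDP-graph but not a minimal DPDP-graph. -/

import Mathlib

open SimpleGraph

variable {V : Type*}

/-- `D` is a dominating set of `G`. -/
def Dominating (G : SimpleGraph V) (D : Set V) : Prop :=
  ∀ v ∉ D, ∃ u ∈ D, G.Adj v u

/-- `P` is a paired-dominating set of `G`: it is dominating and the induced
subgraph `G[P]` contains a perfect matching (given by an involutive pairing of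
the vertices of `P` along edges inside `P`). -/
def PairedDominating (G : SimpleGraph V) (P : Set V) : Prop :=
  Dominating G P ∧ ∃ m : V → V, ∀ v ∈ P, m v ∈ P ∧ G.Adj v (m v) ∧ m (m v) = v

/-- `(D, P)` is a DP-pair: a partition of the vertex set into a dominating set `D`
and a paired-dominating set `P`. -/
def IsDPPair (G : SimpleGraph V) (D P : Set V) : Prop :=
  Disjoint D P ∧ D ∪ P = Set.univ ∧ Dominating G D ∧ PairedDominating G P

/-- `G` is a DPDP-graph: its vertex set partitions into a dominating set and a
paired-dominating set. -/
def IsDPDP (G : SimpleGraph V) : Prop := ∃ D P, IsDPPair G D P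

/-- A minimal DPDP-graph: a DPDP-graph no proper spanning subgraph of which is DPDP. -/
def IsMinimalDPDP (G : SimpleGraph V) : Prop :=
  IsDPDP G ∧ ∀ G' : SimpleGraph V, G' < G → ¬ IsDPDP G'

/-- A leaf is a vertex of degree 1. -/
def IsLeaf (G : SimpleGraph V) (v : V) : Prop := (G.neighborSet v).ncard = 1

/-- A support vertex is a vertex adjacent to at least one leaf. -/
def IsSupport (G : SimpleGraph V) (v : V) : Prop := ∃ u, G.Adj v u ∧ IsLeaf G u

/-- The double subdivision of `H`: each edge `uv` of `H` is replaced by a path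
`u, u_e, v_e, v` with two new internal vertices. The new vertex adjacent to `u`
on the edge `uv` is encoded as `Sum.inr ⟨(u, v), _⟩`. -/
def S2 (H : SimpleGraph V) : SimpleGraph (V ⊕ {e : V × V // H.Adj e.1 e.2}) where
  Adj x y :=
    match x, y with
    | Sum.inl u, Sum.inr e => u = e.1.1
    | Sum.inr e, Sum.inl u => u = e.1.1
    | Sum.inr e, Sum.inr f => e.1.1 = f.1.2 ∧ e.1.2 = f.1.1
    | _, _ => False
  symm := by
    constructor
    rintro (u | e) (w | f) h <;> simp_all
  loopless := by
    constructor
    rintro (u | e) h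
    · exact h
    · exact H.irrefl (h.1 ▸ e.2)

/-- If `x, y` are adjacent vertices of degree 2 in `H` (a graph without isolated
vertices) with remaining neighbors `x'` and `y'` respectively, and both `x'` and
`y'` have a neighbor outside `{x, y}`, then `S₂(H)` is a DPDP-graph but not a
minimal DPDP-graph. -/
theorem stmt15 {V : Type*} (H : SimpleGraph V) (x y x' y' : V)
    (hiso : ∀ v : V, ∃ u, H.Adj v u)
    (hxy : H.Adj x y)
    (hx : H.neighborSet x = {y, x'}) (hx' : x' ≠ y)
    (hy : H.neighborSet y = {x, y'}) (hy' : y' ≠ x)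
    (hx'n : ∃ z, H.Adj x' z ∧ z ≠ x ∧ z ≠ y)
    (hy'n : ∃ z, H.Adj y' z ∧ z ≠ x ∧ z ≠ y) :
    IsDPDP (S2 H) ∧ ¬ IsMinimalDPDP (S2 H) := by
  classical
  have hxx' : H.Adj x x' := by
    have : x' ∈ H.neighborSet x := by rw [hx]; right; rfl
    exact this
  have hyy' : H.Adj y y' := by
    have : y' ∈ H.neighborSet y := by rw [hy]; right; rfl
    exact this
  have hxyne : x ≠ y := hxy.ne
  have hx'x : x' ≠ x := fun h => H.irrefl (h ▸ hxx')
  have hy'y : y' ≠ y := fun h => H.irrefl (h ▸ hyy')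
  constructor
  · refine ⟨Set.range Sum.inl, Set.range Sum.inr, ?_, ?_, ?_, ?_, ?_⟩
    · rw [Set.disjoint_left]
      rintro w ⟨u, rfl⟩ ⟨e, he⟩
      cases he
    · ext w; cases w with
      | inl u => simp
      | inr e => simp
    · rintro (u | e) hv
      · exact absurd ⟨u, rfl⟩ hv
      · exact ⟨Sum.inl e.1.1, ⟨e.1.1, rfl⟩, rfl⟩
    · rintro (u | e) hv
      · obtain ⟨w, hw⟩ := hiso u
        exact ⟨Sum.inr ⟨(u, w), hw⟩, ⟨_, rfl⟩, rfl⟩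
      · exact absurd ⟨e, rfl⟩ hv
    · refine ⟨(fun w => match w with
        | Sum.inl u => Sum.inl u
        | Sum.inr e => Sum.inr ⟨(e.1.2, e.1.1), e.2.symm⟩), ?_⟩
      rintro (u | e) hv
      · obtain ⟨e, he⟩ := hv; cases he
      · exact ⟨⟨_, rfl⟩, ⟨rfl, rfl⟩, rfl⟩
  · rintro ⟨-, hmin⟩
    set a : V ⊕ {e : V × V // H.Adj e.1 e.2} := Sum.inr ⟨(x, y), hxy⟩ with ha
    set b : V ⊕ {e : V × V // H.Adj e.1 e.2} := Sum.inr ⟨(y, x), hxy.symm⟩ with hb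
    refine hmin ((S2 H).deleteEdges {s(a, b)}) ?_ ?_
    · apply lt_of_le_of_ne (SimpleGraph.deleteEdges_le _)
      intro h
      have hne : ¬ ((S2 H).deleteEdges {s(a, b)}).Adj a b := by
        rw [SimpleGraph.deleteEdges_adj]
        rintro ⟨-, h2⟩
        exact h2 rfl
      rw [h] at hne
      exact hne ⟨rfl, rfl⟩
    · obtain ⟨z, hz, hzx, hzy⟩ := hx'n
      obtain ⟨z', hz', hz'x, hz'y⟩ := hy'n
      have hswap : ∀ {p q r s : V}, (p, q) = (r, s) → (q, p) = (s, r) := by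
        intro p q r s h
        rw [Prod.mk.injEq] at h ⊢
        exact ⟨h.2, h.1⟩
      set D : Set (V ⊕ {e : V × V // H.Adj e.1 e.2}) :=
        (fun w => Sum.elim (fun u => u ≠ x ∧ u ≠ y)
          (fun e => e.1 = (x, y) ∨ e.1 = (y, x) ∨ e.1 = (x', x) ∨ e.1 = (y', y)) w) with hD
      have hDinl : ∀ u : V, Sum.inl u ∈ D ↔ (u ≠ x ∧ u ≠ y) := fun u => Iff.rfl
      have hDinr : ∀ e, Sum.inr e ∈ D ↔
          (e.1 = (x, y) ∨ e.1 = (y, x) ∨ e.1 = (x', x) ∨ e.1 = (y', y)) := fun e => Iff.rfl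
      have hadj : ∀ v w, ((S2 H).deleteEdges {s(a, b)}).Adj v w ↔
          (S2 H).Adj v w ∧ ¬ (v = a ∧ w = b ∨ v = b ∧ w = a) := by
        intro v w
        rw [SimpleGraph.deleteEdges_adj, Set.mem_singleton_iff, Sym2.eq_iff]
      set m : (V ⊕ {e : V × V // H.Adj e.1 e.2}) → (V ⊕ {e : V × V // H.Adj e.1 e.2}) :=
        (fun w => Sum.elim (fun u =>
            if u = x then Sum.inr ⟨(x, x'), hxx'⟩
            else if u = y then Sum.inr ⟨(y, y'), hyy'⟩ else Sum.inl u)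
          (fun e =>
            if e.1 = (x, x') then Sum.inl x
            else if e.1 = (y, y') then Sum.inl y
            else Sum.inr ⟨(e.1.2, e.1.1), e.2.symm⟩) w) with hm
      refine ⟨D, Dᶜ, disjoint_compl_right, Set.union_compl_self _, ?_, ?_, m, ?_⟩
      · -- D is dominating
        rintro (u | ⟨⟨u, v⟩, huv⟩) hv
        · rcases not_and_or.mp hv with h | h <;> rw [not_not] at h
          · refine ⟨a, Or.inl rfl, ?_⟩
            rw [hadj]
            exact ⟨h, by simp [ha, hb]⟩
          · refine ⟨b, Or.inr (Or.inl rfl), ?_⟩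
            rw [hadj]
            exact ⟨h, by simp [ha, hb]⟩
        · have hv' : ¬ ((u, v) = (x, y) ∨ (u, v) = (y, x) ∨ (u, v) = (x', x) ∨
              (u, v) = (y', y)) := hv
          push_neg at hv'
          obtain ⟨h1, h2, h3, h4⟩ := hv'
          by_cases hux : u = x
          · have hv2 : v ∈ H.neighborSet x := by rw [← hux]; exact huv
            rw [hx] at hv2
            simp only [Set.mem_insert_iff, Set.mem_singleton_iff] at hv2
            rcases hv2 with h' | h'
            · exact absurd (by simp [hux, h']) h1
            · refine ⟨Sum.inr ⟨(x', x), hxx'.symm⟩, Or.inr (Or.inr (Or.inl rfl)), ?_⟩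
              rw [hadj]
              refine ⟨⟨hux, h'⟩, ?_⟩
              simp [ha, hb, hux, h', hxyne, Ne.symm hxyne, hx', Ne.symm hx', hy',
                Ne.symm hy', hx'x, Ne.symm hx'x, hy'y, Ne.symm hy'y]
          · by_cases huy : u = y
            · have hv2 : v ∈ H.neighborSet y := by rw [← huy]; exact huv
              rw [hy] at hv2
              simp only [Set.mem_insert_iff, Set.mem_singleton_iff] at hv2
              rcases hv2 with h' | h'
              · exact absurd (by simp [huy, h']) h2
              · refine ⟨Sum.inr ⟨(y', y), hyy'.symm⟩, Or.inr (Or.inr (Or.inr rfl)), ?_⟩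
                rw [hadj]
                refine ⟨⟨huy, h'⟩, ?_⟩
                simp [ha, hb, huy, h', hxyne, Ne.symm hxyne, hx', Ne.symm hx', hy',
                  Ne.symm hy', hx'x, Ne.symm hx'x, hy'y, Ne.symm hy'y]
            · refine ⟨Sum.inl u, ⟨hux, huy⟩, ?_⟩
              rw [hadj]
              exact ⟨rfl, by simp [ha, hb]⟩
      · -- Dᶜ is dominating
        rintro (u | ⟨⟨u, v⟩, huv⟩) hv
        · rw [Set.notMem_compl_iff] at hv
          obtain ⟨hux, huy⟩ := (hDinl u).mp hv
          by_cases hux' : u = x'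
          · refine ⟨Sum.inr ⟨(u, z), by rw [hux']; exact hz⟩, ?_, ?_⟩
            · simp only [Set.mem_compl_iff, hDinr]
              rintro (hq | hq | hq | hq)
              · exact hux (congrArg Prod.fst hq)
              · exact huy (congrArg Prod.fst hq)
              · exact hzx (congrArg Prod.snd hq)
              · exact hzy (congrArg Prod.snd hq)
            · rw [hadj]
              exact ⟨rfl, by simp [ha, hb]⟩
          · by_cases huy' : u = y'
            · refine ⟨Sum.inr ⟨(u, z'), by rw [huy']; exact hz'⟩, ?_, ?_⟩
              · simp only [Set.mem_compl_iff, hDinr]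
                rintro (hq | hq | hq | hq)
                · exact hux (congrArg Prod.fst hq)
                · exact huy (congrArg Prod.fst hq)
                · exact hz'x (congrArg Prod.snd hq)
                · exact hz'y (congrArg Prod.snd hq)
              · rw [hadj]
                exact ⟨rfl, by simp [ha, hb]⟩
            · obtain ⟨w, hw⟩ := hiso u
              refine ⟨Sum.inr ⟨(u, w), hw⟩, ?_, ?_⟩
              · simp only [Set.mem_compl_iff, hDinr]
                rintro (hq | hq | hq | hq)
                · exact hux (congrArg Prod.fst hq)
                · exact huy (congrArg Prod.fst hq)
                · exact hux' (congrArg Prod.fst hq)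
                · exact huy' (congrArg Prod.fst hq)
              · rw [hadj]
                exact ⟨rfl, by simp [ha, hb]⟩
        · rw [Set.notMem_compl_iff] at hv
          rcases (hDinr _).mp hv with h | h | h | h
          · -- (u, v) = (x, y)
            refine ⟨Sum.inl u, ?_, ?_⟩
            · simp only [Set.mem_compl_iff, hDinl]
              rintro ⟨hc, -⟩
              exact hc (congrArg Prod.fst h)
            · rw [hadj]
              exact ⟨rfl, by simp [ha, hb]⟩
          · -- (u, v) = (y, x)
            refine ⟨Sum.inl u, ?_, ?_⟩
            · simp only [Set.mem_compl_iff, hDinl]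
              rintro ⟨-, hc⟩
              exact hc (congrArg Prod.fst h)
            · rw [hadj]
              exact ⟨rfl, by simp [ha, hb]⟩
          · -- (u, v) = (x', x)
            have hu : u = x' := congrArg Prod.fst h
            have hv2 : v = x := congrArg Prod.snd h
            refine ⟨Sum.inr ⟨(v, u), huv.symm⟩, ?_, ?_⟩
            · simp only [Set.mem_compl_iff, hDinr]
              rintro (hq | hq | hq | hq)
              · exact hx' (hu.symm.trans (congrArg Prod.snd hq))
              · exact hxyne (hv2.symm.trans (congrArg Prod.fst hq))
              · exact hx'x ((hv2.symm.trans (congrArg Prod.fst hq)).symm)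
              · exact hy' ((hv2.symm.trans (congrArg Prod.fst hq)).symm)
            · rw [hadj]
              refine ⟨⟨rfl, rfl⟩, ?_⟩
              rintro (⟨hq, -⟩ | ⟨hq, -⟩)
              · rw [ha] at hq
                have := congrArg Subtype.val (Sum.inr.inj hq)
                exact hx'x (hu.symm.trans (congrArg Prod.fst this))
              · rw [hb] at hq
                have := congrArg Subtype.val (Sum.inr.inj hq)
                exact hx' (hu.symm.trans (congrArg Prod.fst this))
          · -- (u, v) = (y', y)
            have hu : u = y' := congrArg Prod.fst h
            have hv2 : v = y := congrArg Prod.snd h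
            refine ⟨Sum.inr ⟨(v, u), huv.symm⟩, ?_, ?_⟩
            · simp only [Set.mem_compl_iff, hDinr]
              rintro (hq | hq | hq | hq)
              · exact hxyne ((congrArg Prod.fst hq).symm.trans hv2)
              · exact hy' (hu.symm.trans (congrArg Prod.snd hq))
              · exact hx' ((congrArg Prod.fst hq).symm.trans hv2)
              · exact hy'y ((congrArg Prod.fst hq).symm.trans hv2)
            · rw [hadj]
              refine ⟨⟨rfl, rfl⟩, ?_⟩
              rintro (⟨hq, -⟩ | ⟨hq, -⟩)
              · rw [ha] at hq
                have := congrArg Subtype.val (Sum.inr.inj hq)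
                exact hy' (hu.symm.trans (congrArg Prod.fst this))
              · rw [hb] at hq
                have := congrArg Subtype.val (Sum.inr.inj hq)
                exact hy'y (hu.symm.trans (congrArg Prod.fst this))
      · -- matching on Dᶜ
        rintro (u | ⟨⟨u, v⟩, huv⟩) hv
        · have hv' : ¬ (u ≠ x ∧ u ≠ y) := hv
          rcases not_and_or.mp hv' with h | h <;> rw [not_not] at h
          · -- u = x
            have hm1 : m (Sum.inl u) = Sum.inr ⟨(x, x'), hxx'⟩ := by
              rw [hm]; simp only [Sum.elim_inl, if_pos h]
            have hm2 : m (Sum.inr ⟨(x, x'), hxx'⟩) = Sum.inl x := by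
              rw [hm]; simp only [Sum.elim_inr]; rw [if_pos trivial]
            rw [hm1, hm2]
            refine ⟨?_, ?_, by rw [h]⟩
            · simp only [Set.mem_compl_iff, hDinr]
              rintro (hq | hq | hq | hq)
              · exact hx' (congrArg Prod.snd hq)
              · exact hxyne (congrArg Prod.fst hq)
              · exact hx'x ((congrArg Prod.fst hq).symm)
              · exact hy' ((congrArg Prod.fst hq).symm)
            · rw [hadj]
              refine ⟨h, ?_⟩
              simp [ha, hb]
          · -- u = y
            have hm1 : m (Sum.inl u) = Sum.inr ⟨(y, y'), hyy'⟩ := by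
              rw [hm]
              simp only [Sum.elim_inl, if_neg (h ▸ Ne.symm hxyne : ¬ u = x), if_pos h]
            have hm2 : m (Sum.inr ⟨(y, y'), hyy'⟩) = Sum.inl y := by
              rw [hm]
              have hc1 : ¬ ((y, y') : V × V) = (x, x') := fun hq =>
                hxyne (congrArg Prod.fst hq).symm
              simp only [Sum.elim_inr]; rw [if_neg hc1, if_pos trivial]
            rw [hm1, hm2]
            refine ⟨?_, ?_, by rw [h]⟩
            · simp only [Set.mem_compl_iff, hDinr]
              rintro (hq | hq | hq | hq)
              · exact hxyne (congrArg Prod.fst hq).symm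
              · exact hy' (congrArg Prod.snd hq)
              · exact hx' ((congrArg Prod.fst hq).symm)
              · exact hy'y ((congrArg Prod.fst hq).symm)
            · rw [hadj]
              refine ⟨h, ?_⟩
              simp [ha, hb]
        · have hv' : ¬ ((u, v) = (x, y) ∨ (u, v) = (y, x) ∨ (u, v) = (x', x) ∨
              (u, v) = (y', y)) := hv
          push_neg at hv'
          obtain ⟨h1, h2, h3, h4⟩ := hv'
          by_cases hc1 : ((u, v) : V × V) = (x, x')
          · have hm1 : m (Sum.inr ⟨(u, v), huv⟩) = Sum.inl x := by
              rw [hm]; simp only [Sum.elim_inr, if_pos hc1]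
            have hm2 : m (Sum.inl x) = Sum.inr ⟨(x, x'), hxx'⟩ := by
              rw [hm]; simp only [Sum.elim_inl]; rw [if_pos trivial]
            rw [hm1, hm2]
            refine ⟨?_, ?_, ?_⟩
            · simp only [Set.mem_compl_iff, hDinl]
              rintro ⟨hc, -⟩
              exact hc rfl
            · rw [hadj]
              refine ⟨(congrArg Prod.fst hc1).symm, ?_⟩
              simp [ha, hb]
            · exact congrArg Sum.inr (Subtype.ext hc1.symm)
          · by_cases hc2 : ((u, v) : V × V) = (y, y')
            · have hm1 : m (Sum.inr ⟨(u, v), huv⟩) = Sum.inl y := by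
                rw [hm]; simp only [Sum.elim_inr, if_neg hc1, if_pos hc2]
              have hm2 : m (Sum.inl y) = Sum.inr ⟨(y, y'), hyy'⟩ := by
                rw [hm]
                simp only [Sum.elim_inl]
                rw [if_neg (Ne.symm hxyne : ¬ y = x), if_pos trivial]
              rw [hm1, hm2]
              refine ⟨?_, ?_, ?_⟩
              · simp only [Set.mem_compl_iff, hDinl]
                rintro ⟨-, hc⟩
                exact hc rfl
              · rw [hadj]
                refine ⟨(congrArg Prod.fst hc2).symm, ?_⟩
                simp [ha, hb]
              · exact congrArg Sum.inr (Subtype.ext hc2.symm)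
            · have hm1 : m (Sum.inr ⟨(u, v), huv⟩) = Sum.inr ⟨(v, u), huv.symm⟩ := by
                rw [hm]; simp only [Sum.elim_inr, if_neg hc1, if_neg hc2]
              have hd1 : ¬ ((v, u) : V × V) = (x, x') := fun hq => h3 (hswap hq)
              have hd2 : ¬ ((v, u) : V × V) = (y, y') := fun hq => h4 (hswap hq)
              have hm2 : m (Sum.inr ⟨(v, u), huv.symm⟩) = Sum.inr ⟨(u, v), huv⟩ := by
                rw [hm]; simp only [Sum.elim_inr, if_neg hd1, if_neg hd2]
              rw [hm1, hm2]
              refine ⟨?_, ?_, rfl⟩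
              · simp only [Set.mem_compl_iff, hDinr]
                rintro (hq | hq | hq | hq)
                · exact h2 (hswap hq)
                · exact h1 (hswap hq)
                · exact hc1 (hswap hq)
                · exact hc2 (hswap hq)
              · rw [hadj]
                refine ⟨⟨rfl, rfl⟩, ?_⟩
                rintro (⟨hq, -⟩ | ⟨hq, -⟩)
                · rw [ha] at hq
                  exact h1 (congrArg Subtype.val (Sum.inr.inj hq))
                · rw [hb] at hq
                  exact h2 (congrArg Subtype.val (Sum.inr.inj hq))
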